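/- Let n ≥ 3 be an integer, let a, b, c, d be real numbers with b ≠ 0 and d ≠ 0, and let a₀, …, a_{n−3} : ℝ → ℝ be arbitrary functions. Define φ(x̄) = (x̄ − c(1 + a·x̄))/(b(1 + a·x̄)) on {x̄ : 1 + a·x̄ ≠ 0}. Then there exist functions ā₀, …, ā_{n−3} : ℝ → ℝ (depending only on a, b, c, d and the a_j, not on any particular solution) such that: for every open set U ⊆ ℝ and every function y : ℝ → ℝ that is n times continuously differentiable on U and satisfies y⁽ⁿ⁾(x) + Σ_{j=0}^{n−3} a_j(x)·y⁽ʲ⁾(x) = 0 for all x ∈ U, the function ȳ(x̄) := d·(1 + a·x̄)^{n−1}·y(φ(x̄)) satisfies ȳ⁽ⁿ⁾(x̄) + Σ_{j=0}^{n−3} ā_j(x̄)·ȳ⁽ʲ⁾(x̄) = 0 at every x̄ with 1 + a·x̄ ≠ 0 and φ(x̄) ∈ U. -/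

import Mathlib

/-- The point transformation of the independent variable:
`φ(x̄) = (x̄ − c(1 + a x̄)) / (b(1 + a x̄))`. -/
noncomputable def phi (a b c : ℝ) (x : ℝ) : ℝ :=
  (x - c * (1 + a * x)) / (b * (1 + a * x))

open Filter Set Polynomial Finset

namespace Stmt0

noncomputable def gg (a d : ℝ) (n : ℕ) : ℝ → ℝ := fun t => d * (1 + a * t) ^ (n - 1)

noncomputable def psi (a b : ℝ) : ℝ → ℝ := fun t => 1 / (b * (1 + a * t) ^ 2)

noncomputable def cf (a b d : ℝ) (n : ℕ) : ℕ → ℕ → ℝ → ℝ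
  | 0, 0 => gg a d n
  | 0, _ + 1 => 0
  | i + 1, 0 => deriv (cf a b d n i 0)
  | i + 1, k + 1 => deriv (cf a b d n i (k + 1)) + fun t => psi a b t * cf a b d n i k t

variable {a b c d : ℝ} {n : ℕ}

lemma isOpen_V (a : ℝ) : IsOpen {t : ℝ | 1 + a * t ≠ 0} := by
  have h : {t : ℝ | 1 + a * t ≠ 0} = (fun t : ℝ => 1 + a * t) ⁻¹' ({0}ᶜ) := rfl
  rw [h]
  exact isOpen_compl_singleton.preimage (by continuity)

lemma hasDerivAt_phi (hb : b ≠ 0) {t : ℝ} (ht : 1 + a * t ≠ 0) :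
    HasDerivAt (phi a b c) (psi a b t) t := by
  have hnum : HasDerivAt (fun x : ℝ => x - c * (1 + a * x)) (1 - c * a) t := by
    simpa using (hasDerivAt_id t).fun_sub
      (((hasDerivAt_const t (1 : ℝ)).add ((hasDerivAt_id t).const_mul a)).const_mul c)
  have hden : HasDerivAt (fun x : ℝ => b * (1 + a * x)) (b * a) t := by
    simpa using ((hasDerivAt_const t (1 : ℝ)).add ((hasDerivAt_id t).const_mul a)).const_mul b
  have hden0 : b * (1 + a * t) ≠ 0 := mul_ne_zero hb ht
  have h := hnum.div hden hden0
  have e : psi a b t = ((1 - c * a) * (b * (1 + a * t)) - (t - c * (1 + a * t)) * (b * a))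
      / (b * (1 + a * t)) ^ 2 := by
    unfold psi
    field_simp
    ring
  rw [e]
  exact h

lemma phi_sub (hb : b ≠ 0) {t s : ℝ} (ht : 1 + a * t ≠ 0) (hs : 1 + a * s ≠ 0) :
    phi a b c t - phi a b c s = (t - s) / (b * (1 + a * t) * (1 + a * s)) := by
  unfold phi
  rw [div_sub_div _ _ (mul_ne_zero hb ht) (mul_ne_zero hb hs),
    div_eq_div_iff (mul_ne_zero (mul_ne_zero hb ht) (mul_ne_zero hb hs))
      (mul_ne_zero (mul_ne_zero hb ht) hs)]
  ring


def Sm (a : ℝ) (f : ℝ → ℝ) : Prop := ContDiffOn ℝ (⊤ : ℕ∞) f {t : ℝ | 1 + a * t ≠ 0}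

lemma Sm.deriv' {f : ℝ → ℝ} (h : Sm a f) : Sm a (deriv f) :=
  h.deriv_of_isOpen (isOpen_V a) (le_of_eq rfl)

lemma Sm.diffAt {f : ℝ → ℝ} (h : Sm a f) {t : ℝ} (ht : 1 + a * t ≠ 0) :
    DifferentiableAt ℝ f t :=
  (h.differentiableOn (by simp)).differentiableAt ((isOpen_V a).mem_nhds ht)

lemma sm_gg : Sm a (gg a d n) :=
  ((contDiff_const.mul ((contDiff_const.add (contDiff_const.mul contDiff_id)).pow _))).contDiffOn

lemma sm_psi (hb : b ≠ 0) : Sm a (psi a b) := by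
  refine ContDiffOn.div contDiffOn_const ?_ ?_
  · exact (contDiff_const.mul ((contDiff_const.add (contDiff_const.mul contDiff_id)).pow _)).contDiffOn
  · intro t ht
    exact mul_ne_zero hb (pow_ne_zero _ ht)

lemma psi_ne_zero (hb : b ≠ 0) {t : ℝ} (ht : 1 + a * t ≠ 0) : psi a b t ≠ 0 :=
  one_div_ne_zero (mul_ne_zero hb (pow_ne_zero _ ht))

lemma sm_cf (hb : b ≠ 0) : ∀ i k, Sm a (cf a b d n i k) := by
  intro i
  induction i with
  | zero =>
    intro k
    cases k with
    | zero => exact sm_gg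
    | succ k => exact contDiffOn_const
  | succ i ih =>
    intro k
    cases k with
    | zero => exact (ih 0).deriv'
    | succ k =>
      show Sm a (deriv (cf a b d n i (k + 1)) + fun t => psi a b t * cf a b d n i k t)
      exact ContDiffOn.add (ih (k + 1)).deriv' (ContDiffOn.mul (sm_psi hb) (ih k))

lemma deriv_zero_fun : deriv (0 : ℝ → ℝ) = 0 := by
  funext t
  exact deriv_const t 0

lemma cf_eq_zero : ∀ i k, i < k → cf a b d n i k = 0 := by
  intro i
  induction i with
  | zero =>
    intro k hk
    match k, hk with
    | k + 1, _ => rfl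
  | succ i ih =>
    intro k hk
    match k, hk with
    | k + 1, hk =>
      show deriv (cf a b d n i (k + 1)) + (fun t => psi a b t * cf a b d n i k t) = 0
      rw [ih (k + 1) (by omega), ih k (by omega), deriv_zero_fun]
      funext t
      simp

lemma cf_diag : ∀ i, cf a b d n i i = fun t => gg a d n t * psi a b t ^ i := by
  intro i
  induction i with
  | zero => funext t; simp [cf]
  | succ i ih =>
    show deriv (cf a b d n i (i + 1)) + (fun t => psi a b t * cf a b d n i i t) = _
    rw [cf_eq_zero i (i + 1) (by omega), deriv_zero_fun, ih]
    funext t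
    simp
    ring


lemma evEq_iteratedDeriv (m : ℕ) :
    ∀ (f g : ℝ → ℝ) (x : ℝ), f =ᶠ[nhds x] g → iteratedDeriv m f x = iteratedDeriv m g x := by
  induction m with
  | zero => intro f g x h; simpa using h.self_of_nhds
  | succ m ih =>
    intro f g x h
    rw [iteratedDeriv_succ', iteratedDeriv_succ']
    exact ih _ _ _ h.deriv

lemma iteratedDeriv_poly (m : ℕ) : ∀ p : ℝ[X],
    iteratedDeriv m (fun x => p.eval x) = fun x => (derivative^[m] p).eval x := by
  induction m with
  | zero => intro p; simp
  | succ m ih =>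
    intro p
    rw [iteratedDeriv_succ']
    have h : deriv (fun x => p.eval x) = fun x => (derivative p).eval x := by
      funext x; exact Polynomial.deriv (p := p)
    rw [h, ih, Function.iterate_succ_apply]

lemma hasDerivAt_iteratedDeriv {U : Set ℝ} (hU : IsOpen U) {y : ℝ → ℝ}
    (hy : ContDiffOn ℝ (n : ℕ∞) y U) {k : ℕ} (hk : k < n) {x : ℝ} (hx : x ∈ U) :
    HasDerivAt (iteratedDeriv k y) (iteratedDeriv (k + 1) y x) x := by
  have hEq : Set.EqOn (iteratedDerivWithin k y U) (iteratedDeriv k y) U := by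
    intro z hz
    have h2 := iteratedFDerivWithin_of_isOpen (𝕜 := ℝ) (f := y) (s := U) k hU hz
    simp only [iteratedDerivWithin_eq_iteratedFDerivWithin, iteratedDeriv_eq_iteratedFDeriv, h2]
  have hdo : DifferentiableOn ℝ (iteratedDerivWithin k y U) U :=
    hy.differentiableOn_iteratedDerivWithin (by exact_mod_cast hk) hU.uniqueDiffOn
  have hda : DifferentiableAt ℝ (iteratedDerivWithin k y U) x :=
    (hdo x hx).differentiableAt (hU.mem_nhds hx)
  have hev : iteratedDerivWithin k y U =ᶠ[nhds x] iteratedDeriv k y :=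
    Filter.eventuallyEq_of_mem (hU.mem_nhds hx) hEq
  have hda' : DifferentiableAt ℝ (iteratedDeriv k y) x := hev.differentiableAt_iff.mp hda
  have h := hda'.hasDerivAt
  rwa [show deriv (iteratedDeriv k y) = iteratedDeriv (k + 1) y from (iteratedDeriv_succ).symm] at h


lemma rep (hb : b ≠ 0) {U : Set ℝ} (hU : IsOpen U) {y : ℝ → ℝ}
    (hy : ContDiffOn ℝ (n : ℕ∞) y U) :
    ∀ i, i ≤ n → ∀ t : ℝ, 1 + a * t ≠ 0 → phi a b c t ∈ U →
      iteratedDeriv i (fun s => gg a d n s * y (phi a b c s)) t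
        = ∑ k ∈ Finset.range (i + 1),
            cf a b d n i k t * iteratedDeriv k y (phi a b c t) := by
  intro i
  induction i with
  | zero =>
    intro _ t ht htU
    simp [cf, iteratedDeriv_zero]
  | succ i ih =>
    intro hin t ht htU
    have hi : i ≤ n := Nat.le_of_succ_le hin
    have hphiC : ContinuousOn (phi a b c) {t : ℝ | 1 + a * t ≠ 0} :=
      fun s hs => ((hasDerivAt_phi hb hs).continuousAt).continuousWithinAt
    have hW : IsOpen ({t : ℝ | 1 + a * t ≠ 0} ∩ phi a b c ⁻¹' U) :=
      hphiC.isOpen_inter_preimage (isOpen_V a) hU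
    have htW : t ∈ {t : ℝ | 1 + a * t ≠ 0} ∩ phi a b c ⁻¹' U := ⟨ht, htU⟩
    have hev : iteratedDeriv i (fun s => gg a d n s * y (phi a b c s)) =ᶠ[nhds t]
        fun s => ∑ k ∈ Finset.range (i + 1),
          cf a b d n i k s * iteratedDeriv k y (phi a b c s) :=
      Filter.eventuallyEq_of_mem (hW.mem_nhds htW) (fun s hs => ih hi s hs.1 hs.2)
    rw [iteratedDeriv_succ, hev.deriv_eq]
    have hterm : ∀ k ∈ Finset.range (i + 1),
        HasDerivAt (fun s => cf a b d n i k s * iteratedDeriv k y (phi a b c s))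
          (deriv (cf a b d n i k) t * iteratedDeriv k y (phi a b c t)
            + cf a b d n i k t * (iteratedDeriv (k + 1) y (phi a b c t) * psi a b t)) t := by
      intro k hk
      have hck : HasDerivAt (cf a b d n i k) (deriv (cf a b d n i k) t) t :=
        ((sm_cf hb i k).diffAt ht).hasDerivAt
      have hkn : k < n := lt_of_lt_of_le (Finset.mem_range.mp hk) hin
      have hyk := hasDerivAt_iteratedDeriv hU hy hkn htU
      have hcomp := hyk.comp t (hasDerivAt_phi hb ht)
      exact hck.mul hcomp
    rw [(HasDerivAt.fun_sum hterm).deriv]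
    -- algebraic rearrangement
    have hRHS : ∑ k ∈ Finset.range (i + 1 + 1),
        cf a b d n (i + 1) k t * iteratedDeriv k y (phi a b c t)
        = ∑ k ∈ Finset.range (i + 1),
            (deriv (cf a b d n i (k + 1)) t * iteratedDeriv (k + 1) y (phi a b c t)
              + psi a b t * cf a b d n i k t * iteratedDeriv (k + 1) y (phi a b c t))
          + deriv (cf a b d n i 0) t * iteratedDeriv 0 y (phi a b c t) := by
      rw [Finset.sum_range_succ']
      congr 1
      · refine Finset.sum_congr rfl fun k _ => ?_
        show (deriv (cf a b d n i (k + 1)) + fun t => psi a b t * cf a b d n i k t) t * _ = _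
        simp only [Pi.add_apply]
        ring
    rw [hRHS, Finset.sum_add_distrib, Finset.sum_add_distrib]
    have h1 : ∑ k ∈ Finset.range (i + 1),
        deriv (cf a b d n i k) t * iteratedDeriv k y (phi a b c t)
        = ∑ k ∈ Finset.range (i + 1),
            deriv (cf a b d n i (k + 1)) t * iteratedDeriv (k + 1) y (phi a b c t)
          + deriv (cf a b d n i 0) t * iteratedDeriv 0 y (phi a b c t) := by
      rw [Finset.sum_range_succ (fun k => deriv (cf a b d n i (k + 1)) t
        * iteratedDeriv (k + 1) y (phi a b c t))]
      rw [cf_eq_zero i (i + 1) (by omega), deriv_zero_fun]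
      simp only [Pi.zero_apply, zero_mul, add_zero]
      exact (Finset.sum_range_succ' (fun k => deriv (cf a b d n i k) t
        * iteratedDeriv k y (phi a b c t)) i)
    have h2 : ∑ k ∈ Finset.range (i + 1),
        cf a b d n i k t * (iteratedDeriv (k + 1) y (phi a b c t) * psi a b t)
        = ∑ k ∈ Finset.range (i + 1),
            psi a b t * cf a b d n i k t * iteratedDeriv (k + 1) y (phi a b c t) :=
      Finset.sum_congr rfl fun k _ => by ring
    rw [h1, h2]
    ring


lemma iteratedDeriv_sub_pow (x0 : ℝ) (j k : ℕ) :
    iteratedDeriv k (fun x : ℝ => (x - x0) ^ j) x0 = if k = j then (j.factorial : ℝ) else 0 := by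
  have h1 : (fun x : ℝ => (x - x0) ^ j)
      = fun x => ((Polynomial.X - Polynomial.C x0) ^ j : ℝ[X]).eval x := by
    funext x; simp
  rw [h1, iteratedDeriv_poly, Polynomial.iterate_derivative_X_sub_pow]
  rcases lt_trichotomy k j with h | h | h
  · rw [if_neg (by omega)]
    simp [sub_self, zero_pow (by omega : j - k ≠ 0)]
  · subst h
    simp [Nat.descFactorial_self]
  · rw [if_neg (by omega)]
    simp [Nat.descFactorial_eq_zero_iff_lt.mpr h]

lemma bol (hb : b ≠ 0) (hn : 1 ≤ n) {t0 : ℝ} (ht0 : 1 + a * t0 ≠ 0) :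
    ∀ j < n, cf a b d n n j t0 = 0 := by
  intro j hj
  set x0 : ℝ := phi a b 0 t0 with hx0
  have hy : ContDiffOn ℝ (n : ℕ∞) (fun x : ℝ => (x - x0) ^ j) univ :=
    ((contDiff_id.sub contDiff_const).pow j).contDiffOn
  have hrep := rep (a := a) (c := (0:ℝ)) (d := d) hb isOpen_univ hy n le_rfl t0 ht0 (mem_univ _)
  set K : ℝ := d / (b * (1 + a * t0)) ^ j with hK
  set q : ℝ[X] := Polynomial.C K * (1 + Polynomial.C a * Polynomial.X) ^ (n - 1 - j)
      * (Polynomial.X - Polynomial.C t0) ^ j with hqdef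
  have hq : ∀ s : ℝ, 1 + a * s ≠ 0 →
      gg a d n s * (phi a b 0 s - x0) ^ j = q.eval s := by
    intro s hs
    have hps : phi a b 0 s - x0 = (s - t0) / (b * (1 + a * s) * (1 + a * t0)) :=
      phi_sub hb hs ht0
    have hsplit : (1 + a * s) ^ (n - 1) = (1 + a * s) ^ (n - 1 - j) * (1 + a * s) ^ j := by
      rw [← pow_add]; congr 1; omega
    rw [hps]
    simp only [hqdef, Polynomial.eval_mul, Polynomial.eval_pow, Polynomial.eval_add,
      Polynomial.eval_one, Polynomial.eval_sub, Polynomial.eval_C, Polynomial.eval_X,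
      Polynomial.eval_mul]
    rw [div_pow, hK]
    unfold gg
    rw [hsplit]
    have key : (b * (1 + a * s) * (1 + a * t0)) ^ j
        = (1 + a * s) ^ j * (b * (1 + a * t0)) ^ j := by
      rw [show b * (1 + a * s) * (1 + a * t0) = (1 + a * s) * (b * (1 + a * t0)) by ring,
        mul_pow]
    rw [key]
    have h1 : (1 + a * s) ^ j ≠ 0 := pow_ne_zero _ hs
    have h2 : (b * (1 + a * t0)) ^ j ≠ 0 := pow_ne_zero _ (mul_ne_zero hb ht0)
    field_simp
  have hev : (fun s => gg a d n s * (fun x : ℝ => (x - x0) ^ j) (phi a b 0 s))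
      =ᶠ[nhds t0] fun s => q.eval s :=
    Filter.eventuallyEq_of_mem ((isOpen_V a).mem_nhds ht0) (fun s hs => hq s hs)
  have hdeg : q.natDegree < n := by
    have hd1 : q.natDegree ≤ (n - 1 - j) + j := by
      rw [hqdef]
      compute_degree
    omega
  have hzero : iteratedDeriv n
      (fun s => gg a d n s * (fun x : ℝ => (x - x0) ^ j) (phi a b 0 s)) t0 = 0 := by
    rw [evEq_iteratedDeriv n _ _ _ hev, iteratedDeriv_poly,
      Polynomial.iterate_derivative_eq_zero hdeg]
    simp
  rw [hzero] at hrep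
  have hsum : ∑ k ∈ Finset.range (n + 1),
      cf a b d n n k t0 * iteratedDeriv k (fun x : ℝ => (x - x0) ^ j) (phi a b 0 t0)
      = cf a b d n n j t0 * (j.factorial : ℝ) := by
    rw [← hx0]
    calc ∑ k ∈ Finset.range (n + 1),
        cf a b d n n k t0 * iteratedDeriv k (fun x : ℝ => (x - x0) ^ j) x0
        = ∑ k ∈ Finset.range (n + 1),
            (if k = j then cf a b d n n k t0 * (j.factorial : ℝ) else 0) := by
          refine Finset.sum_congr rfl fun k _ => ?_
          rw [iteratedDeriv_sub_pow]
          split <;> simp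
      _ = cf a b d n n j t0 * (j.factorial : ℝ) := by
          rw [Finset.sum_ite_eq' (Finset.range (n + 1)) j
            (fun k => cf a b d n n k t0 * (j.factorial : ℝ))]
          rw [if_pos (Finset.mem_range.mpr (by omega))]
  rw [hsum] at hrep
  have hfac : (j.factorial : ℝ) ≠ 0 := Nat.cast_ne_zero.mpr (Nat.factorial_ne_zero j)
  exact (mul_eq_zero.mp hrep.symm).resolve_right hfac


end Stmt0

open Stmt0 Matrix in
/-- the transformation `x = φ(x̄)`, `ȳ(x̄) = d (1+a x̄)^(n-1) y(φ(x̄))`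
maps every linear ODE in the canonical form
`y⁽ⁿ⁾ + a_{n-3} y⁽ⁿ⁻³⁾ + ⋯ + a₀ y = 0` to an equation of the same canonical form. -/
theorem stmt_0 (n : ℕ) (hn : 3 ≤ n) (a b c d : ℝ) (hb : b ≠ 0) (hd : d ≠ 0)
    (A : ℕ → ℝ → ℝ) :
    ∃ Abar : ℕ → ℝ → ℝ,
      ∀ (U : Set ℝ), IsOpen U →
        ∀ y : ℝ → ℝ, ContDiffOn ℝ (n : ℕ∞) y U →
          (∀ x ∈ U,
              iteratedDeriv n y x
                + ∑ j ∈ Finset.range (n - 2), A j x * iteratedDeriv j y x = 0) →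
          ∀ xb : ℝ, 1 + a * xb ≠ 0 → phi a b c xb ∈ U →
            iteratedDeriv n
                (fun s => d * (1 + a * s) ^ (n - 1) * y (phi a b c s)) xb
              + ∑ j ∈ Finset.range (n - 2),
                  Abar j xb *
                    iteratedDeriv j
                      (fun s => d * (1 + a * s) ^ (n - 1) * y (phi a b c s)) xb
              = 0 := by
  classical
  set M : ℝ → Matrix (Fin (n - 2)) (Fin (n - 2)) ℝ :=
    fun t => Matrix.of fun i k : Fin (n - 2) => cf a b d n (i : ℕ) (k : ℕ) t with hM
  set Abar : ℕ → ℝ → ℝ := fun j t =>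
    if h : j < n - 2 then
      cf a b d n n n t * ∑ i : Fin (n - 2), A (i : ℕ) (phi a b c t) * (M t)⁻¹ i ⟨j, h⟩
    else 0 with hAbardef
  refine ⟨Abar, ?_⟩
  intro U hU y hy hsol t ht htU
  -- invertibility of M t
  have hdiagne : ∀ i : Fin (n - 2), cf a b d n (i : ℕ) (i : ℕ) t ≠ 0 := by
    intro i
    rw [cf_diag]
    exact mul_ne_zero (mul_ne_zero hd (pow_ne_zero _ ht))
      (pow_ne_zero _ (psi_ne_zero hb ht))
  have hlow : (M t).BlockTriangular OrderDual.toDual := by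
    intro i k hik
    have hik' : (i : ℕ) < (k : ℕ) := hik
    show cf a b d n (i : ℕ) (k : ℕ) t = 0
    rw [cf_eq_zero _ _ hik']
    rfl
  have hdet : (M t).det ≠ 0 := by
    rw [Matrix.det_of_lowerTriangular (M t) hlow]
    exact Finset.prod_ne_zero_iff.mpr fun i _ => hdiagne i
  have hinv : (M t)⁻¹ * M t = 1 := Matrix.nonsing_inv_mul _ (isUnit_iff_ne_zero.mpr hdet)
  -- vectors of derivatives
  have hwgg : (fun s => d * (1 + a * s) ^ (n - 1) * y (phi a b c s))
      = fun s => gg a d n s * y (phi a b c s) := rfl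
  set w : ℝ → ℝ := fun s => d * (1 + a * s) ^ (n - 1) * y (phi a b c s) with hw
  set Yv : Fin (n - 2) → ℝ := fun k => iteratedDeriv (k : ℕ) y (phi a b c t) with hYv
  set Wv : Fin (n - 2) → ℝ := fun i => iteratedDeriv (i : ℕ) w t with hWv
  have hMY : M t *ᵥ Yv = Wv := by
    funext i
    have hrep := rep (a := a) (c := c) (d := d) hb hU hy (i : ℕ) (by omega) t ht htU
    have h1 : (M t *ᵥ Yv) i = ∑ k : Fin (n - 2),
        cf a b d n (i : ℕ) (k : ℕ) t * iteratedDeriv (k : ℕ) y (phi a b c t) := rfl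
    rw [h1, Fin.sum_univ_eq_sum_range
      (fun k => cf a b d n (i : ℕ) k t * iteratedDeriv k y (phi a b c t)) (n - 2)]
    have hsub : Finset.range ((i : ℕ) + 1) ⊆ Finset.range (n - 2) :=
      Finset.range_subset_range.mpr (by omega)
    rw [← Finset.sum_subset hsub (fun k hk hk' => by
      rw [cf_eq_zero (i : ℕ) k (by
        simp only [Finset.mem_range] at hk hk'; omega)]
      simp)]
    rw [← hrep]
    rfl
  have hY : Yv = (M t)⁻¹ *ᵥ Wv := by
    rw [← hMY, Matrix.mulVec_mulVec, hinv, Matrix.one_mulVec]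
  have hYvi : ∀ i : Fin (n - 2), Yv i = ∑ j : Fin (n - 2), (M t)⁻¹ i j * Wv j := by
    intro i
    rw [hY]
    rfl
  -- top derivative
  have htop : iteratedDeriv n w t
      = cf a b d n n n t * iteratedDeriv n y (phi a b c t) := by
    have hrep := rep (a := a) (c := c) (d := d) hb hU hy n le_rfl t ht htU
    have e : iteratedDeriv n w t
        = iteratedDeriv n (fun s => gg a d n s * y (phi a b c s)) t := rfl
    rw [e, hrep, Finset.sum_range_succ]
    have hz : ∑ k ∈ Finset.range n,
        cf a b d n n k t * iteratedDeriv k y (phi a b c t) = 0 :=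
      Finset.sum_eq_zero fun k hk => by
        rw [bol hb (by omega) ht k (Finset.mem_range.mp hk), zero_mul]
    rw [hz, zero_add]
  -- the ODE at phi t
  have h0 : iteratedDeriv n y (phi a b c t)
      + ∑ i : Fin (n - 2), A (i : ℕ) (phi a b c t) * Yv i = 0 := by
    have h := hsol (phi a b c t) htU
    rwa [← Fin.sum_univ_eq_sum_range
      (fun j => A j (phi a b c t) * iteratedDeriv j y (phi a b c t)) (n - 2)] at h
  -- the Abar sum
  have hkey : ∑ j ∈ Finset.range (n - 2), Abar j t * iteratedDeriv j w t
      = cf a b d n n n t * ∑ i : Fin (n - 2), A (i : ℕ) (phi a b c t) * Yv i := by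
    rw [← Fin.sum_univ_eq_sum_range (fun j => Abar j t * iteratedDeriv j w t) (n - 2)]
    have hterm : ∀ j : Fin (n - 2), Abar (j : ℕ) t * iteratedDeriv (j : ℕ) w t
        = ∑ i : Fin (n - 2), cf a b d n n n t
            * (A (i : ℕ) (phi a b c t) * ((M t)⁻¹ i j * Wv j)) := by
      intro j
      rw [hAbardef]
      simp only [dif_pos j.isLt, Fin.eta]
      rw [show (iteratedDeriv (j : ℕ) w t) = Wv j from rfl]
      rw [mul_assoc, Finset.sum_mul, Finset.mul_sum]
      exact Finset.sum_congr rfl fun i _ => by ring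
    calc ∑ j : Fin (n - 2), Abar (j : ℕ) t * iteratedDeriv (j : ℕ) w t
        = ∑ j : Fin (n - 2), ∑ i : Fin (n - 2), cf a b d n n n t
            * (A (i : ℕ) (phi a b c t) * ((M t)⁻¹ i j * Wv j)) :=
          Finset.sum_congr rfl fun j _ => hterm j
      _ = ∑ i : Fin (n - 2), ∑ j : Fin (n - 2), cf a b d n n n t
            * (A (i : ℕ) (phi a b c t) * ((M t)⁻¹ i j * Wv j)) := Finset.sum_comm
      _ = ∑ i : Fin (n - 2), cf a b d n n n t
            * (A (i : ℕ) (phi a b c t) * Yv i) := by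
          refine Finset.sum_congr rfl fun i _ => ?_
          rw [← Finset.mul_sum, ← Finset.mul_sum, ← hYvi i]
      _ = cf a b d n n n t * ∑ i : Fin (n - 2),
            A (i : ℕ) (phi a b c t) * Yv i := by rw [Finset.mul_sum]
  rw [htop, hkey, ← mul_add, h0, mul_zero]
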